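/- For every tuple of n strings (S₁,…,Sₙ), the number of interesting pairs is O(n log n); concretely, the number of pairs (i,j) with i < j such that LCP(Sᵢ,Sₗ) < LCP(Sᵢ,Sⱼ) for all i < ℓ < j is at most 2n·⌈log₂ n⌉. -/

import Mathlib

def lcpLen {α : Type*} [DecidableEq α] : List α → List α → ℕ
  | a :: s, b :: t => if a = b then lcpLen s t + 1 else 0
  | _, _ => 0

/-- A pair `(i,j)` is interesting for the tuple `S` if `i < j` and every index strictly
between `i` and `j` has a smaller LCP with `Sᵢ` than `Sⱼ` does. -/
def Interesting {α : Type*} [DecidableEq α] (S : ℕ → List α) (i j : ℕ) : Prop :=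
  i < j ∧ ∀ l, i < l → l < j → lcpLen (S i) (S l) < lcpLen (S i) (S j)

namespace CIP
variable {α : Type*} [DecidableEq α]

lemma lcpLen_comm (s t : List α) : lcpLen s t = lcpLen t s := by
  induction s generalizing t with
  | nil => cases t <;> simp [lcpLen]
  | cons a s ih =>
    cases t with
    | nil => simp [lcpLen]
    | cons b t =>
      simp only [lcpLen]
      rcases eq_or_ne a b with h | h
      · subst h; simp [ih]
      · simp [h, Ne.symm h]

lemma lcpLen_le_length (s t : List α) : lcpLen s t ≤ s.length := by
  induction s generalizing t with
  | nil => cases t <;> simp [lcpLen]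
  | cons a s ih =>
    cases t with
    | nil => simp [lcpLen]
    | cons b t =>
      simp only [lcpLen, List.length_cons]
      split_ifs
      · exact Nat.succ_le_succ (ih t)
      · omega

lemma lcpLen_self (s : List α) : lcpLen s s = s.length := by
  induction s with
  | nil => simp [lcpLen]
  | cons a s ih => simp [lcpLen, ih]

lemma lcpLen_min_le (s t u : List α) :
    min (lcpLen s t) (lcpLen t u) ≤ lcpLen s u := by
  induction s generalizing t u with
  | nil => simp [lcpLen]
  | cons a s ih =>
    cases t with
    | nil => simp [lcpLen]
    | cons b t =>
      cases u with
      | nil => simp [lcpLen]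
      | cons c u =>
        simp only [lcpLen]
        rcases eq_or_ne a b with h1 | h1
        · subst h1
          rcases eq_or_ne a c with h2 | h2
          · subst h2
            have := ih t u
            split_ifs with h
            · omega
            · exact absurd rfl h
          · simp [h2]
        · simp [h1]

/-- transfer: if `h ≤ lcp a b` and `h ≤ lcp b c` then `h ≤ lcp a c`. -/
lemma lcpLen_trans {h : ℕ} {a b c : List α} (h1 : h ≤ lcpLen a b) (h2 : h ≤ lcpLen b c) :
    h ≤ lcpLen a c :=
  le_trans (le_min h1 h2) (lcpLen_min_le a b c)


/-- threshold minus one: max lcp with intermediate indices -/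
def hmv (S : ℕ → List α) (i j : ℕ) : ℕ := (Finset.Ioo i j).sup fun m => lcpLen (S i) (S m)

/-- first index above `i` realizing the max -/
noncomputable def lv (S : ℕ → List α) (i j : ℕ) : ℕ :=
  sInf {m | i < m ∧ lcpLen (S i) (S m) = hmv S i j}

/-- the ball of radius `hmv` -/
def Dv (S : ℕ → List α) (n i j : ℕ) : Finset ℕ :=
  (Finset.Icc 1 n).filter fun m => hmv S i j ≤ lcpLen (S i) (S m)

/-- the sub-ball around `x` at threshold `hmv + 1` -/
def Av (S : ℕ → List α) (n i j x : ℕ) : Finset ℕ :=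
  (Finset.Icc 1 n).filter fun m => hmv S i j < lcpLen (S x) (S m)

section
variable {S : ℕ → List α} {n i j m : ℕ}

lemma Ioo_ne (hadj : i + 1 < j) : (Finset.Ioo i j).Nonempty :=
  ⟨i + 1, by rw [Finset.mem_Ioo]; omega⟩

lemma hm_lt (hI : Interesting S i j) (hadj : i + 1 < j) :
    hmv S i j < lcpLen (S i) (S j) := by
  obtain ⟨m, hm⟩ := Ioo_ne (i := i) hadj
  rw [Finset.mem_Ioo] at hm
  have hpos : (0 : ℕ) < lcpLen (S i) (S j) :=
    lt_of_le_of_lt (Nat.zero_le _) (hI.2 m hm.1 hm.2)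
  rw [hmv, Finset.sup_lt_iff hpos]
  intro b hb
  rw [Finset.mem_Ioo] at hb
  exact hI.2 b hb.1 hb.2

lemma le_hm (hm1 : i < m) (hm2 : m < j) : lcpLen (S i) (S m) ≤ hmv S i j :=
  Finset.le_sup (f := fun m => lcpLen (S i) (S m)) (Finset.mem_Ioo.mpr ⟨hm1, hm2⟩)

lemma l_spec (hadj : i + 1 < j) :
    i < lv S i j ∧ lv S i j < j ∧ lcpLen (S i) (S (lv S i j)) = hmv S i j := by
  obtain ⟨l₀, hl₀m, hl₀⟩ := Finset.exists_mem_eq_sup (Finset.Ioo i j) (Ioo_ne hadj)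
    (fun m => lcpLen (S i) (S m))
  rw [Finset.mem_Ioo] at hl₀m
  have hne : {m | i < m ∧ lcpLen (S i) (S m) = hmv S i j}.Nonempty :=
    ⟨l₀, hl₀m.1, hl₀.symm⟩
  have hmem := Nat.sInf_mem hne
  have hle : lv S i j ≤ l₀ := Nat.sInf_le ⟨hl₀m.1, hl₀.symm⟩
  exact ⟨hmem.1, lt_of_le_of_lt hle hl₀m.2, hmem.2⟩

/-- nothing of the ball strictly between `i` and `l` -/
lemma between_lt (hadj : i + 1 < j) (h1 : i < m) (h2 : m < lv S i j) :
    lcpLen (S i) (S m) < hmv S i j := by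
  have hlj := (l_spec (S := S) hadj).2.1
  have hle : lcpLen (S i) (S m) ≤ hmv S i j := le_hm h1 (lt_trans h2 hlj)
  rcases lt_or_eq_of_le hle with h | h
  · exact h
  · have hmem : m ∈ {m | i < m ∧ lcpLen (S i) (S m) = hmv S i j} := ⟨h1, h⟩
    have := Nat.sInf_le hmem
    rw [← lv] at this
    omega

/-- `j` is determined: it is the least index above `i` with lcp exceeding `hmv`. -/
lemma j_det (hadj : i + 1 < j) (h1 : i < m) (h2 : hmv S i j < lcpLen (S i) (S m)) :
    j ≤ m := by
  by_contra h
  have := le_hm (S := S) h1 (show m < j by omega)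
  omega

lemma i_mem_D (h1 : 1 ≤ i) (hij : i < j) (hjn : j ≤ n) (hadj : i + 1 < j) :
    i ∈ Dv S n i j := by
  rw [Dv, Finset.mem_filter, Finset.mem_Icc]
  refine ⟨⟨h1, by omega⟩, ?_⟩
  obtain ⟨l₀, hl₀m, hl₀⟩ := Finset.exists_mem_eq_sup (Finset.Ioo i j) (Ioo_ne hadj)
    (fun m => lcpLen (S i) (S m))
  rw [hmv, hl₀, lcpLen_self]
  exact lcpLen_le_length _ _

lemma l_mem_D (h1 : 1 ≤ i) (hjn : j ≤ n) (hadj : i + 1 < j) :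
    lv S i j ∈ Dv S n i j := by
  obtain ⟨ha, hb, hc⟩ := l_spec (S := S) hadj
  rw [Dv, Finset.mem_filter, Finset.mem_Icc]
  exact ⟨⟨by omega, by omega⟩, le_of_eq hc.symm⟩

lemma j_mem_Ai (h1 : 1 ≤ i) (hjn : j ≤ n) (hI : Interesting S i j) (hadj : i + 1 < j) :
    j ∈ Av S n i j i := by
  rw [Av, Finset.mem_filter, Finset.mem_Icc]
  exact ⟨⟨by omega, hjn⟩, hm_lt hI hadj⟩

lemma Ai_subset_D : Av S n i j i ⊆ Dv S n i j := by
  intro m hm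
  rw [Av, Finset.mem_filter] at hm
  rw [Dv, Finset.mem_filter]
  exact ⟨hm.1, le_of_lt hm.2⟩

lemma Al_subset_D (hadj : i + 1 < j) : Av S n i j (lv S i j) ⊆ Dv S n i j := by
  intro m hm
  rw [Av, Finset.mem_filter] at hm
  rw [Dv, Finset.mem_filter]
  have hc := (l_spec (S := S) hadj).2.2
  exact ⟨hm.1, lcpLen_trans (le_of_eq hc.symm) (le_of_lt hm.2)⟩

lemma Ai_disj_Al (hadj : i + 1 < j) :
    Disjoint (Av S n i j i) (Av S n i j (lv S i j)) := by
  rw [Finset.disjoint_left]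
  intro m hmi hml
  rw [Av, Finset.mem_filter] at hmi hml
  have hc := (l_spec (S := S) hadj).2.2
  have : hmv S i j + 1 ≤ lcpLen (S i) (S (lv S i j)) := by
    refine lcpLen_trans (a := S i) (b := S m) (c := S (lv S i j)) hmi.2 ?_
    rw [lcpLen_comm]
    exact hml.2
  omega

lemma card_sum_le (hadj : i + 1 < j) :
    (Av S n i j i).card + (Av S n i j (lv S i j)).card ≤ (Dv S n i j).card := by
  rw [← Finset.card_union_of_disjoint (Ai_disj_Al hadj)]
  exact Finset.card_le_card (Finset.union_subset Ai_subset_D (Al_subset_D hadj))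

lemma three_le_card_D (h1 : 1 ≤ i) (hjn : j ≤ n) (hI : Interesting S i j) (hadj : i + 1 < j) :
    3 ≤ (Dv S n i j).card := by
  obtain ⟨ha, hb, hc⟩ := l_spec (S := S) hadj
  have hsub : ({i, lv S i j, j} : Finset ℕ) ⊆ Dv S n i j := by
    intro m hm
    simp only [Finset.mem_insert, Finset.mem_singleton] at hm
    rcases hm with rfl | rfl | rfl
    · exact i_mem_D h1 hI.1 hjn hadj
    · exact l_mem_D h1 hjn hadj
    · exact Ai_subset_D (j_mem_Ai h1 hjn hI hadj)
  have hcard : ({i, lv S i j, j} : Finset ℕ).card = 3 := by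
    rw [Finset.card_insert_of_notMem, Finset.card_insert_of_notMem, Finset.card_singleton]
    · simp only [Finset.mem_singleton]; omega
    · simp only [Finset.mem_insert, Finset.mem_singleton]; push_neg; omega
  have hle := Finset.card_le_card hsub
  omega

lemma card_D_le : (Dv S n i j).card ≤ n := by
  have := Finset.card_filter_le (Finset.Icc 1 n)
    (fun m => hmv S i j ≤ lcpLen (S i) (S m))
  rw [Nat.card_Icc] at this
  exact le_trans this (by omega)

lemma clog_strict {a b : ℕ} (ha : 0 < a) (hab : 2 * a ≤ b) :
    Nat.clog 2 a < Nat.clog 2 b := by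
  by_contra hcon
  push_neg at hcon
  have hble : b ≤ 2 ^ Nat.clog 2 a := by
    rw [← Nat.clog_le_iff_le_pow (by norm_num)]
    exact hcon
  rcases Nat.eq_or_lt_of_le ha with h1 | h1
  · have h0 : Nat.clog 2 a = 0 := by rw [← h1]; simp
    rw [h0] at hble; simp at hble; omega
  · have hc : 1 ≤ Nat.clog 2 a := by
      by_contra hc
      push_neg at hc
      have h0 : Nat.clog 2 a ≤ 0 := by omega
      have : a ≤ 2 ^ 0 := (Nat.clog_le_iff_le_pow (by norm_num)).mp h0
      simp at this; omega
    have hstrict : ¬ (a ≤ 2 ^ (Nat.clog 2 a - 1)) := by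
      rw [← Nat.clog_le_iff_le_pow (by norm_num)]
      omega
    push_neg at hstrict
    have hpow : 2 ^ Nat.clog 2 a = 2 * 2 ^ (Nat.clog 2 a - 1) := by
      rw [← pow_succ']
      congr 1
      omega
    omega

lemma two_le_clog {c : ℕ} (hc : 3 ≤ c) : 2 ≤ Nat.clog 2 c := by
  by_contra h
  push_neg at h
  have h1 : Nat.clog 2 c ≤ 1 := by omega
  have : c ≤ 2 ^ 1 := (Nat.clog_le_iff_le_pow (by norm_num)).mp h1
  omega

lemma one_le_clog {c : ℕ} (hc : 2 ≤ c) : 1 ≤ Nat.clog 2 c := by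
  by_contra h
  push_neg at h
  have h1 : Nat.clog 2 c ≤ 0 := by omega
  have : c ≤ 2 ^ 0 := (Nat.clog_le_iff_le_pow (by norm_num)).mp h1
  omega

/-- role-`i` halving: if two non-adjacent interesting pairs share `i`, `p`'s `Aᵢ` part is the
small one, and `p`'s threshold is smaller, then `q`'s ball has strictly smaller clog. -/
lemma aux_true {j' : ℕ} (h1 : 1 ≤ i) (hjn : j ≤ n) (hadj : i + 1 < j)
    (hjn' : j' ≤ n) (hI' : Interesting S i j') (hadj' : i + 1 < j')
    (hrole : (Av S n i j i).card ≤ (Av S n i j (lv S i j)).card)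
    (hlt : hmv S i j < hmv S i j') :
    Nat.clog 2 (Dv S n i j').card < Nat.clog 2 (Dv S n i j).card := by
  have hsub : Dv S n i j' ⊆ Av S n i j i := by
    intro m hm
    rw [Dv, Finset.mem_filter] at hm
    rw [Av, Finset.mem_filter]
    exact ⟨hm.1, lt_of_lt_of_le hlt hm.2⟩
  have hcs := card_sum_le (S := S) (n := n) hadj
  have hc1 := Finset.card_le_card hsub
  have h2 : 2 * (Dv S n i j').card ≤ (Dv S n i j).card := by omega
  exact clog_strict (by have := three_le_card_D h1 hjn' hI' hadj'; omega) h2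

/-- role-`l` halving. -/
lemma aux_false {i' j' : ℕ} (h1 : 1 ≤ i) (hjn : j ≤ n) (hadj : i + 1 < j)
    (h1' : 1 ≤ i') (hjn' : j' ≤ n) (hI' : Interesting S i' j') (hadj' : i' + 1 < j')
    (hl : lv S i j = lv S i' j')
    (hrole : (Av S n i j (lv S i j)).card ≤ (Av S n i j i).card)
    (hlt : hmv S i j < hmv S i' j') :
    Nat.clog 2 (Dv S n i' j').card < Nat.clog 2 (Dv S n i j).card := by
  have hc' : lcpLen (S i') (S (lv S i j)) = hmv S i' j' := by
    rw [hl]; exact (l_spec (S := S) hadj').2.2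
  have hsub : Dv S n i' j' ⊆ Av S n i j (lv S i j) := by
    intro m hm
    rw [Dv, Finset.mem_filter] at hm
    rw [Av, Finset.mem_filter]
    refine ⟨hm.1, lt_of_lt_of_le hlt ?_⟩
    refine lcpLen_trans (a := S (lv S i j)) (b := S i') (c := S m) ?_ hm.2
    rw [lcpLen_comm, hc']
  have hcs := card_sum_le (S := S) (n := n) hadj
  have hc1 := Finset.card_le_card hsub
  have h2 : 2 * (Dv S n i' j').card ≤ (Dv S n i j).card := by omega
  exact clog_strict (by have := three_le_card_D h1' hjn' hI' hadj'; omega) h2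

/-- if two pairs share `l` and threshold, the left endpoints cannot differ. -/
lemma aux_ilt {i' j' : ℕ} (hadj : i + 1 < j) (hadj' : i' + 1 < j')
    (hl : lv S i j = lv S i' j') (hhm : hmv S i j = hmv S i' j') (hii : i < i') : False := by
  have hs := l_spec (S := S) hadj
  have hs' := l_spec (S := S) hadj'
  have hi'l : i' < lv S i j := by rw [hl]; exact hs'.1
  have hlow : hmv S i j ≤ lcpLen (S i) (S i') := by
    refine lcpLen_trans (a := S i) (b := S (lv S i j)) (c := S i') (le_of_eq hs.2.2.symm) ?_
    rw [lcpLen_comm, hl, hs'.2.2]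
    omega
  have := between_lt (S := S) hadj hii hi'l
  omega

/-- the charging map. -/
noncomputable def F (S : ℕ → List α) (n a b : ℕ) : ℕ × ℕ × Bool :=
  if b = a + 1 then (a, 1, true)
  else if (Av S n a b a).card ≤ (Av S n a b (lv S a b)).card
    then (a, Nat.clog 2 (Dv S n a b).card, true)
    else (lv S a b, Nat.clog 2 (Dv S n a b).card, false)

end

end CIP

theorem count_interesting_pairs {α : Type*} [DecidableEq α] (n : ℕ) (S : ℕ → List α) :
    {p : ℕ × ℕ | 1 ≤ p.1 ∧ p.2 ≤ n ∧ Interesting S p.1 p.2}.ncard ≤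
      2 * n * Nat.clog 2 n := by
  classical
  rcases Nat.lt_or_ge n 2 with hn | hn
  · have hempty : {p : ℕ × ℕ | 1 ≤ p.1 ∧ p.2 ≤ n ∧ Interesting S p.1 p.2} = ∅ := by
      ext ⟨i, j⟩
      simp only [Set.mem_setOf_eq, Set.mem_empty_iff_false, iff_false, not_and]
      intro h1 h2 hI
      have := hI.1
      omega
    rw [hempty]
    simp
  · set T : Finset (ℕ × ℕ × Bool) :=
      Finset.Icc 1 n ×ˢ Finset.Icc 1 (Nat.clog 2 n) ×ˢ (Finset.univ : Finset Bool) with hT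
    have hmemT : ∀ (a b : ℕ) (c : Bool), 1 ≤ a → a ≤ n → 1 ≤ b →
        b ≤ Nat.clog 2 n → (a, b, c) ∈ T := by
      intro a b c ha1 ha2 hb1 hb2
      rw [hT, Finset.mem_product, Finset.mem_product]
      exact ⟨Finset.mem_Icc.mpr ⟨ha1, ha2⟩, Finset.mem_Icc.mpr ⟨hb1, hb2⟩, Finset.mem_univ _⟩
    have hmaps : ∀ p ∈ {p : ℕ × ℕ | 1 ≤ p.1 ∧ p.2 ≤ n ∧ Interesting S p.1 p.2},
        (fun p : ℕ × ℕ => CIP.F S n p.1 p.2) p ∈ (↑T : Set (ℕ × ℕ × Bool)) := by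
      rintro ⟨i, j⟩ ⟨h1, hjn, hI⟩
      replace h1 : 1 ≤ i := h1
      replace hjn : j ≤ n := hjn
      replace hI : Interesting S i j := hI
      have hij := hI.1
      rw [Finset.mem_coe]
      show CIP.F S n i j ∈ T
      by_cases hadj : j = i + 1
      · rw [CIP.F]; rw [if_pos hadj]
        exact hmemT _ _ _ h1 (by omega) (le_refl 1) (CIP.one_le_clog hn)
      · have hadj' : i + 1 < j := by omega
        have h3 := CIP.three_le_card_D h1 hjn hI hadj'
        have ht2 : 2 ≤ Nat.clog 2 (CIP.Dv S n i j).card := CIP.two_le_clog h3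
        have htn : Nat.clog 2 (CIP.Dv S n i j).card ≤ Nat.clog 2 n :=
          Nat.clog_mono_right 2 (CIP.card_D_le)
        have hls := CIP.l_spec (S := S) hadj'
        rw [CIP.F]; rw [if_neg hadj]
        split_ifs with hrole
        · exact hmemT _ _ _ h1 (by omega) (by omega) htn
        · exact hmemT _ _ _ (by omega) (by omega) (by omega) htn
    have hinj : Set.InjOn (fun p : ℕ × ℕ => CIP.F S n p.1 p.2)
        {p : ℕ × ℕ | 1 ≤ p.1 ∧ p.2 ≤ n ∧ Interesting S p.1 p.2} := by
      rintro ⟨i, j⟩ ⟨h1, hjn, hI⟩ ⟨i', j'⟩ ⟨h1', hjn', hI'⟩ heq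
      replace h1 : 1 ≤ i := h1
      replace hjn : j ≤ n := hjn
      replace hI : Interesting S i j := hI
      replace h1' : 1 ≤ i' := h1'
      replace hjn' : j' ≤ n := hjn'
      replace hI' : Interesting S i' j' := hI'
      have hij := hI.1
      have hij' := hI'.1
      replace heq : CIP.F S n i j = CIP.F S n i' j' := heq
      rw [CIP.F] at heq
      rw [show CIP.F S n i' j' = _ from rfl, CIP.F] at heq
      by_cases hadj : j = i + 1 <;> by_cases hadj' : j' = i' + 1
      · rw [if_pos hadj, if_pos hadj'] at heq
        simp only [Prod.mk.injEq] at heq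
        exact Prod.ext heq.1 (by omega)
      · exfalso
        have hA : i' + 1 < j' := by omega
        have ht2 : 2 ≤ Nat.clog 2 (CIP.Dv S n i' j').card :=
          CIP.two_le_clog (CIP.three_le_card_D h1' hjn' hI' hA)
        rw [if_pos hadj, if_neg hadj'] at heq
        split_ifs at heq <;> simp only [Prod.mk.injEq] at heq <;>
          · obtain ⟨-, h2, -⟩ := heq; omega
      · exfalso
        have hA : i + 1 < j := by omega
        have ht2 : 2 ≤ Nat.clog 2 (CIP.Dv S n i j).card :=
          CIP.two_le_clog (CIP.three_le_card_D h1 hjn hI hA)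
        rw [if_pos hadj', if_neg hadj] at heq
        split_ifs at heq <;> simp only [Prod.mk.injEq] at heq <;>
          · obtain ⟨-, h2, -⟩ := heq; omega
      · have hA : i + 1 < j := by omega
        have hA' : i' + 1 < j' := by omega
        rw [if_neg hadj, if_neg hadj'] at heq
        split_ifs at heq with hr hr' hr' <;> simp only [Prod.mk.injEq] at heq
        · -- both role i
          obtain ⟨hii, htt, -⟩ := heq
          subst hii
          have hhm : CIP.hmv S i j = CIP.hmv S i j' := by
            rcases lt_trichotomy (CIP.hmv S i j) (CIP.hmv S i j') with h | h | h
            · exact absurd (CIP.aux_true h1 hjn hA hjn' hI' hA' hr h) (by omega)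
            · exact h
            · exact absurd (CIP.aux_true h1 hjn' hA' hjn hI hA hr' h) (by omega)
          have hjj : j = j' := by
            refine le_antisymm ?_ ?_
            · refine CIP.j_det (S := S) (m := j') hA (by omega) ?_
              rw [hhm]
              exact CIP.hm_lt hI' hA'
            · refine CIP.j_det (S := S) (m := j) hA' (by omega) ?_
              rw [← hhm]
              exact CIP.hm_lt hI hA
          exact Prod.ext rfl hjj
        · exact Bool.noConfusion heq.2.2
        · exact Bool.noConfusion heq.2.2
        · -- both role l
          obtain ⟨hll, htt, -⟩ := heq
          have hhm : CIP.hmv S i j = CIP.hmv S i' j' := by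
            rcases lt_trichotomy (CIP.hmv S i j) (CIP.hmv S i' j') with h | h | h
            · exact absurd (CIP.aux_false h1 hjn hA h1' hjn' hI' hA' hll (by omega) h) (by omega)
            · exact h
            · exact absurd (CIP.aux_false h1' hjn' hA' h1 hjn hI hA hll.symm (by omega) h)
                (by omega)
          have hii : i = i' := by
            rcases lt_trichotomy i i' with h | h | h
            · exact absurd (CIP.aux_ilt hA hA' hll hhm h) not_false
            · exact h
            · exact absurd (CIP.aux_ilt hA' hA hll.symm hhm.symm h) not_false
          subst hii
          have hjj : j = j' := by
            refine le_antisymm ?_ ?_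
            · refine CIP.j_det (S := S) (m := j') hA (by omega) ?_
              rw [hhm]
              exact CIP.hm_lt hI' hA'
            · refine CIP.j_det (S := S) (m := j) hA' (by omega) ?_
              rw [← hhm]
              exact CIP.hm_lt hI hA
          exact Prod.ext rfl hjj
    have hcount := Set.ncard_le_ncard_of_injOn (fun p : ℕ × ℕ => CIP.F S n p.1 p.2)
      hmaps hinj (T.finite_toSet)
    rw [Set.ncard_coe_finset] at hcount
    refine le_trans hcount ?_
    rw [hT, Finset.card_product, Finset.card_product, Nat.card_Icc, Nat.card_Icc,
      Finset.card_univ]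
    simp only [Fintype.card_bool]
    have e1 : n + 1 - 1 = n := by omega
    have e2 : Nat.clog 2 n + 1 - 1 = Nat.clog 2 n := by omega
    rw [e1, e2]
    exact le_of_eq (by ring)
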